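/- Let 𝒜̃ be the covering noncrossing algebra of a finite Coxeter group W, which is a braided Hopf algebra in the Yetter–Drinfeld category over ℂW with comultiplication Δ(α_t) = α_t ⊗ 1 + 1 ⊗ α_t, counit ε(α_t) = 0, and antipode S(α_t) = −α_t. Then the antipode is given on monomials by S(α_{t₁}⋯α_{t_k}) = ε(t₁,…,t_k) · α_{t_k} α_{t_{k−1}^{t_k}} ⋯ α_{t₁^{t₂⋯t_k}}, where ε(t₁,…,t_k) = (−1)^k ∏_{i=2}^k (−1)^{ℓ(t_i⋯t_k)} and ℓ denotes Coxeter length. -/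
import Mathlib


open scoped Classical

/-- The absolute (reflection) length of `w`. -/
noncomputable def absLen {B : Type*} {W : Type*} [Group W] {M : CoxeterMatrix B}
    (cs : CoxeterSystem M W) (w : W) : ℕ :=
  sInf {k : ℕ | ∃ l : List W, (∀ t ∈ l, cs.IsReflection t) ∧ l.length = k ∧ l.prod = w}

/-- The set of reflections of a Coxeter system, as a type. -/
abbrev Refl {B : Type*} {W : Type*} [Group W] {M : CoxeterMatrix B}
    (cs : CoxeterSystem M W) : Type _ := {t : W // cs.IsReflection t}

/-- Conjugation `s^u := u⁻¹ s u` of a reflection by a group element. -/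
def conjR {B : Type*} {W : Type*} [Group W] {M : CoxeterMatrix B}
    {cs : CoxeterSystem M W} (s : Refl cs) (u : W) : Refl cs :=
  ⟨u⁻¹ * (s : W) * u, by have := s.2.conj u⁻¹; rwa [inv_inv] at this⟩

/-- The monomial `α_{t₁} ⋯ α_{t_k}` in the free algebra over `ℂ`. -/
noncomputable def mono {B : Type*} {W : Type*} [Group W] {M : CoxeterMatrix B}
    (cs : CoxeterSystem M W) (l : List (Refl cs)) : FreeAlgebra ℂ (Refl cs) :=
  (l.map (FreeAlgebra.ι ℂ)).prod

/-- The defining relations of the covering noncrossing algebra `𝒜̃`. -/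
inductive CoverRel {B : Type*} {W : Type*} [Group W] [Fintype W] {M : CoxeterMatrix B}
    (cs : CoxeterSystem M W) :
    FreeAlgebra ℂ (Refl cs) → FreeAlgebra ℂ (Refl cs) → Prop
  | sq (t : Refl cs) :
      CoverRel cs (FreeAlgebra.ι ℂ t * FreeAlgebra.ι ℂ t) 0
  | sum (w : W) (h : absLen cs w = 2) :
      CoverRel cs
        (∑ p : Refl cs × Refl cs,
          if (p.1 : W) * (p.2 : W) = w then
            FreeAlgebra.ι ℂ p.1 * FreeAlgebra.ι ℂ p.2 else 0) 0

/-- The list of reflections underlying the image of a monomial under the antipode: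
`S(α_{t₁}⋯α_{t_k}) = ± α_{t_k} α_{t_{k−1}^{t_k}} ⋯ α_{t₁^{t₂⋯t_k}}`. -/
def antiTuple {B : Type*} {W : Type*} [Group W] {M : CoxeterMatrix B}
    {cs : CoxeterSystem M W} : List (Refl cs) → List (Refl cs)
  | [] => []
  | t :: l => antiTuple l ++ [conjR t ((l.map Subtype.val).prod)]

/-- The sign `ε(t₁,…,t_k) = (−1)^k ∏_{i=2}^k (−1)^{ℓ(t_i⋯t_k)}` appearing in the formula
for the antipode, where `ℓ` is the Coxeter length. -/
noncomputable def antiSign {B : Type*} {W : Type*} [Group W] {M : CoxeterMatrix B}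
    (cs : CoxeterSystem M W) (l : List (Refl cs)) : ℂ :=
  (-1 : ℂ) ^ l.length *
    ∏ j ∈ Finset.Ico 1 l.length,
      (-1 : ℂ) ^ (cs.length (((l.drop j).map Subtype.val).prod))

section Helpers
variable {B W : Type*} [Group W] {M : CoxeterMatrix B} {cs : CoxeterSystem M W}

@[simp] lemma conjR_val (s : Refl cs) (u : W) :
    ((conjR s u : Refl cs) : W) = u⁻¹ * (s : W) * u := rfl

lemma prod_map_conjR (l : List (Refl cs)) (u : W) :
    ((l.map (fun s => conjR s u)).map Subtype.val).prod
      = u⁻¹ * (l.map Subtype.val).prod * u := by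
  induction l with
  | nil => simp
  | cons t l ih =>
      simp only [List.map_cons, List.prod_cons, ih, conjR_val]
      group

lemma conjR_one (s : Refl cs) : conjR s 1 = s := by
  apply Subtype.ext; simp

lemma conjR_conjR (s : Refl cs) (u v : W) :
    conjR (conjR s u) v = conjR s (u * v) := by
  apply Subtype.ext; simp [mul_assoc]

lemma antiTuple_map (l : List (Refl cs)) (u : W) :
    antiTuple (l.map (fun s => conjR s u)) = (antiTuple l).map (fun s => conjR s u) := by
  induction l with
  | nil => rfl
  | cons t l ih =>
      simp only [List.map_cons, antiTuple, ih, prod_map_conjR, List.map_append,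
        List.map_cons, List.map_nil]
      congr 1
      rw [conjR_conjR, conjR_conjR]
      congr 2
      group

lemma antiTuple_concat (l : List (Refl cs)) (t : Refl cs) :
    antiTuple (l ++ [t]) = t :: (antiTuple l).map (fun s => conjR s (t : W)) := by
  induction l with
  | nil => simp [antiTuple, conjR_one]
  | cons s l ih =>
      simp only [List.cons_append, antiTuple, ih, List.map_append, List.prod_append,
        List.map_cons, List.map_nil, List.prod_cons, List.prod_nil, mul_one,
        List.append_eq]
      rw [conjR_conjR]

lemma neg_one_pow_len_mul (w₁ w₂ : W) :
    (-1 : ℂ) ^ cs.length (w₁ * w₂)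
      = (-1) ^ (cs.length w₁) * (-1) ^ (cs.length w₂) := by
  rw [neg_one_pow_eq_pow_mod_two, cs.length_mul_mod_two, ← neg_one_pow_eq_pow_mod_two, pow_add]

lemma antiSign_concat (l : List (Refl cs)) (t : Refl cs) :
    antiSign cs (l ++ [t]) =
      -(((-1 : ℂ) ^ (cs.length (t : W))) ^ l.length) *
        antiSign cs (l.map (fun s => conjR s (t : W))) := by
  have he2 : ((-1 : ℂ) ^ (cs.length (t : W))) * ((-1 : ℂ) ^ (cs.length (t : W))) = 1 := by
    rw [← pow_add, ← two_mul, pow_mul, neg_one_sq, one_pow]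
  unfold antiSign
  have hlen1 : (l ++ [t]).length = l.length + 1 := by simp
  have hlen2 : (l.map (fun s => conjR s (t : W))).length = l.length := by simp
  rw [hlen1, hlen2]
  have hL : ∀ j ∈ Finset.Ico 1 (l.length + 1),
      (-1 : ℂ) ^ (cs.length ((((l ++ [t]).drop j).map Subtype.val).prod))
        = (-1 : ℂ) ^ (cs.length (((l.drop j).map Subtype.val).prod))
            * (-1 : ℂ) ^ (cs.length (t : W)) := by
    intro j hj
    have hjk : j ≤ l.length := by
      have := (Finset.mem_Ico.mp hj).2; omega
    rw [List.drop_append_of_le_length hjk, List.map_append, List.prod_append]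
    simp only [List.map_cons, List.map_nil, List.prod_cons, List.prod_nil, mul_one]
    rw [neg_one_pow_len_mul]
  have hR : ∀ j ∈ Finset.Ico 1 l.length,
      (-1 : ℂ) ^ (cs.length ((((l.map (fun s => conjR s (t : W))).drop j).map Subtype.val).prod))
        = (-1 : ℂ) ^ (cs.length (((l.drop j).map Subtype.val).prod)) := by
    intro j hj
    rw [← List.map_drop, prod_map_conjR]
    rw [neg_one_pow_len_mul, neg_one_pow_len_mul, cs.length_inv]
    rw [mul_comm ((-1 : ℂ) ^ cs.length (t : W)), mul_assoc, he2, mul_one]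
  rw [Finset.prod_congr rfl hL, Finset.prod_congr rfl hR, Finset.prod_mul_distrib,
    Finset.prod_const, Nat.card_Ico]
  rcases Nat.eq_zero_or_pos l.length with h0 | h0
  · rw [List.length_eq_zero_iff] at h0; subst h0; simp
  · rw [show l.length + 1 - 1 = l.length by omega,
      Finset.prod_Ico_succ_top h0, List.drop_length]
    simp only [List.map_nil, List.prod_nil, cs.length_one, pow_zero, mul_one]
    rw [pow_succ]
    ring
end Helpers

/-- Let `𝒜̃` be the covering noncrossing algebra of a finite Coxeter
group `W`, a braided Hopf algebra in the Yetter–Drinfeld category over `ℂW` with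
`Δ(α_t) = α_t ⊗ 1 + 1 ⊗ α_t`, `ε(α_t) = 0`, `S(α_t) = −α_t`, and
`S(xy) = S(y)S(|y|⁻¹·x)`.  Then the antipode is given on monomials by
`S(α_{t₁}⋯α_{t_k}) = ε(t₁,…,t_k) · α_{t_k} α_{t_{k−1}^{t_k}} ⋯ α_{t₁^{t₂⋯t_k}}`,
where `ε(t₁,…,t_k) = (−1)^k ∏_{i=2}^k (−1)^{ℓ(t_i⋯t_k)}`. -/
theorem cover_antipode_formula (B : Type*) (W : Type*) [Group W] [Fintype W]
    (M : CoxeterMatrix B) (cs : CoxeterSystem M W)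
    (φ : W →* (RingQuot (CoverRel cs) ≃ₐ[ℂ] RingQuot (CoverRel cs)))
    (hφ : ∀ (w t : W) (ht : cs.IsReflection t),
      φ w (RingQuot.mkAlgHom ℂ (CoverRel cs) (FreeAlgebra.ι ℂ (⟨t, ht⟩ : Refl cs)))
        = ((-1 : ℂ) ^ cs.length w) •
            RingQuot.mkAlgHom ℂ (CoverRel cs)
              (FreeAlgebra.ι ℂ (⟨w * t * w⁻¹, ht.conj w⟩ : Refl cs)))
    (S : RingQuot (CoverRel cs) →ₗ[ℂ] RingQuot (CoverRel cs))
    (hS1 : S 1 = 1)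
    (hSgen : ∀ t : Refl cs,
      S (RingQuot.mkAlgHom ℂ (CoverRel cs) (FreeAlgebra.ι ℂ t)) =
        - RingQuot.mkAlgHom ℂ (CoverRel cs) (FreeAlgebra.ι ℂ t))
    (hSrec : ∀ (t : Refl cs) (x : RingQuot (CoverRel cs)),
      S (x * RingQuot.mkAlgHom ℂ (CoverRel cs) (FreeAlgebra.ι ℂ t)) =
        - RingQuot.mkAlgHom ℂ (CoverRel cs) (FreeAlgebra.ι ℂ t) * S (φ (t : W) x)) :
    ∀ l : List (Refl cs),
      S (RingQuot.mkAlgHom ℂ (CoverRel cs) (mono cs l)) =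
        antiSign cs l • RingQuot.mkAlgHom ℂ (CoverRel cs) (mono cs (antiTuple l)) := by
  have hmk_cons : ∀ (t : Refl cs) (m : List (Refl cs)),
      RingQuot.mkAlgHom ℂ (CoverRel cs) (mono cs (t :: m)) =
        RingQuot.mkAlgHom ℂ (CoverRel cs) (FreeAlgebra.ι ℂ t) *
          RingQuot.mkAlgHom ℂ (CoverRel cs) (mono cs m) := by
    intro t m
    rw [mono, mono, List.map_cons, List.prod_cons, map_mul]
  have hmk_concat : ∀ (m : List (Refl cs)) (t : Refl cs),
      RingQuot.mkAlgHom ℂ (CoverRel cs) (mono cs (m ++ [t])) =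
        RingQuot.mkAlgHom ℂ (CoverRel cs) (mono cs m) *
          RingQuot.mkAlgHom ℂ (CoverRel cs) (FreeAlgebra.ι ℂ t) := by
    intro m t
    rw [mono, mono, List.map_append, List.prod_append, map_mul]
    simp
  have hφmono : ∀ (v : W) (m : List (Refl cs)),
      φ v (RingQuot.mkAlgHom ℂ (CoverRel cs) (mono cs m)) =
        (((-1 : ℂ) ^ cs.length v) ^ m.length) •
          RingQuot.mkAlgHom ℂ (CoverRel cs)
            (mono cs (m.map (fun s : Refl cs => (⟨v * (s : W) * v⁻¹, s.2.conj v⟩ : Refl cs)))) := by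
    intro v m
    induction m with
    | nil => simp [mono]
    | cons t m ih =>
        have ht := hφ v (t : W) t.2
        rw [show (⟨(t : W), t.2⟩ : Refl cs) = t from rfl] at ht
        rw [hmk_cons, map_mul, ih, ht, List.map_cons, hmk_cons, List.length_cons,
          smul_mul_smul_comm, pow_succ]
        congr 1
        ring
  have hc : ∀ (t : Refl cs),
      (fun s : Refl cs => (⟨(t : W) * (s : W) * (t : W)⁻¹, s.2.conj (t : W)⟩ : Refl cs)) =
        (fun s => conjR s (t : W)) := by
    intro t
    funext s
    apply Subtype.ext
    simp [t.2.inv]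
  suffices key : ∀ (n : ℕ) (l : List (Refl cs)), l.length = n →
      S (RingQuot.mkAlgHom ℂ (CoverRel cs) (mono cs l)) =
        antiSign cs l • RingQuot.mkAlgHom ℂ (CoverRel cs) (mono cs (antiTuple l)) from
    fun l => key l.length l rfl
  intro n
  induction n with
  | zero =>
      intro l hl
      rw [List.length_eq_zero_iff] at hl
      subst hl
      simp [mono, antiTuple, antiSign, hS1]
  | succ n ih =>
      intro l hl
      rcases List.eq_nil_or_concat l with rfl | ⟨l', t, rfl⟩
      · simp at hl
      · rw [List.concat_eq_append] at hl ⊢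
        have hn : l'.length = n := by simpa using hl
        rw [hmk_concat, hSrec t, hφmono, hc t, map_smul,
          ih (l'.map (fun s => conjR s (t : W))) (by simp [hn]),
          antiTuple_map, antiSign_concat, antiTuple_concat, hmk_cons, hn]
        simp only [smul_smul, Algebra.mul_smul_comm]
        rw [show ∀ (a b : RingQuot (CoverRel cs)), -a * b = -(a*b) from fun a b => neg_mul a b,
          smul_neg, neg_mul]
        module
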